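/- Let r ∈ A be a differential polynomial in two variable families u_n, w_n (n ≥ 0) over ℂ, homogeneous of some fixed differential degree p ≥ 0 (deg u_i = deg w_i = i), with positive homogeneity degree in the u-variables (i.e. every monomial of r contains at least one u_n). If r satisfies ∑_{n≥0} (∂r/∂w_n)·∂_x^n(w·w_x) − w·∂_x r = 0, then r = 0. -/

import Mathlib

open MvPolynomial

/-! Differential polynomials in two variables `u, w` over ℂ: elements of
`ℂ[[u₀,w₀]][u₁,w₁,u₂,w₂,…]`, modeled as `MvPolynomial (Fin 2 × ℕ) (MvPowerSeries (Fin 2) ℂ)`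
where the variable `X (i,n)` stands for `u_{n+1}` (if `i = 0`) or `w_{n+1}` (if `i = 1`),
and the coefficient ring consists of power series in `u₀, w₀`. -/

/-- The ring of differential polynomials in two variables. -/
abbrev DiffPoly2 := MvPolynomial (Fin 2 × ℕ) (MvPowerSeries (Fin 2) ℂ)

/-- Partial derivative of a power series in `u₀,w₀` with respect to the `i`-th variable. -/
noncomputable def mvDeriv (i : Fin 2) (f : MvPowerSeries (Fin 2) ℂ) :
    MvPowerSeries (Fin 2) ℂ :=
  fun e => (e i + 1) • MvPowerSeries.coeff (e + Finsupp.single i 1) f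

/-- `∂/∂u₀` (for `i = 0`) resp. `∂/∂w₀` (for `i = 1`) on differential polynomials. -/
noncomputable def dV0 (i : Fin 2) (p : DiffPoly2) : DiffPoly2 :=
  p.support.sum fun m => monomial m (mvDeriv i (coeff m p))

/-- The total `x`-derivative `∂_x`, determined by `∂_x u_n = u_{n+1}`, `∂_x w_n = w_{n+1}`. -/
noncomputable def dX2 (p : DiffPoly2) : DiffPoly2 :=
  (∑ i : Fin 2, X (i, 0) * dV0 i p) + ∑ v ∈ p.vars, pderiv v p * X (v.1, v.2 + 1)

/-- The partial linearization along the `i`-th variable family: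
`∑_{n≥0} (∂q/∂(u or w)_n) ∂_x^n g`. -/
noncomputable def lin2 (i : Fin 2) (q g : DiffPoly2) : DiffPoly2 :=
  dV0 i q * g + ∑ v ∈ q.vars.filter (fun v => v.1 = i), pderiv v q * dX2^[v.2 + 1] g

/-- The element `u₀`. -/
noncomputable def uu : DiffPoly2 := MvPolynomial.C (MvPowerSeries.X 0)

/-- The element `w₀`. -/
noncomputable def ww : DiffPoly2 := MvPolynomial.C (MvPowerSeries.X 1)

/-- if `r` is a differential polynomial in `u, w`, homogeneous of
differential degree `p` (`deg u_i = deg w_i = i`), every monomial of which contains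
at least one `u`-factor, and `∑_{n≥0} (∂r/∂w_n)·∂_x^n(w·w_x) − w·∂_x r = 0`,
then `r = 0`. -/
lemma coeff_pderiv' {σ R : Type*} [CommSemiring R] (v : σ) (f : MvPolynomial σ R)
    (m : σ →₀ ℕ) :
    coeff m (pderiv v f) = (m v + 1) • coeff (m + Finsupp.single v 1) f := by
  classical
  induction f using MvPolynomial.induction_on' with
  | add p q hp hq => simp [hp, hq]
  | monomial s a =>
    rw [pderiv_monomial, coeff_monomial, coeff_monomial]
    by_cases h : s = m + Finsupp.single v 1
    · subst h
      rw [if_pos (show m + Finsupp.single v 1 - Finsupp.single v 1 = m from add_tsub_cancel_right _ _), if_pos rfl]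
      have hv : (m + Finsupp.single v 1 : σ →₀ ℕ) v = m v + 1 := by simp
      rw [hv, nsmul_eq_mul]
      push_cast
      ring
    · rw [if_neg h, smul_zero]
      split_ifs with h2
      · rcases Nat.eq_zero_or_pos (s v) with hs | hs
        · simp [hs]
        · exfalso
          apply h
          ext x
          have hx : s x - (Finsupp.single v 1) x = m x := by
            rw [← Finsupp.tsub_apply, h2]
          simp only [Finsupp.add_apply, Finsupp.single_apply] at hx ⊢
          by_cases hxv : v = x
          · subst hxv; simp at hx ⊢; omega
          · simp [hxv] at hx ⊢; omega
      · rfl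

lemma mvDeriv_zero (i : Fin 2) : mvDeriv i 0 = 0 := by
  funext e; simp [mvDeriv]; rfl

lemma coeff_dV0 (i : Fin 2) (q : DiffPoly2) (m : (Fin 2 × ℕ) →₀ ℕ) :
    coeff m (dV0 i q) = mvDeriv i (coeff m q) := by
  classical
  rw [dV0, MvPolynomial.coeff_sum]
  rw [Finset.sum_eq_single m (fun m' _ hne => by simp [coeff_monomial, hne])
    (fun hm => by
      rw [MvPolynomial.notMem_support_iff] at hm
      simp [coeff_monomial, hm, mvDeriv_zero])]
  simp [coeff_monomial]

lemma vars_pderiv_subset (v : Fin 2 × ℕ) (q : DiffPoly2) : (pderiv v q).vars ⊆ q.vars := by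
  intro x hx
  rw [mem_vars] at hx ⊢
  obtain ⟨m, hm, hxm⟩ := hx
  refine ⟨m + Finsupp.single v 1, ?_, ?_⟩
  · rw [MvPolynomial.mem_support_iff] at hm ⊢
    intro h
    rw [coeff_pderiv', h, smul_zero] at hm
    exact hm rfl
  · rw [Finsupp.mem_support_iff] at hxm ⊢
    simp only [Finsupp.add_apply]
    omega

lemma vars_dV0_subset (i : Fin 2) (q : DiffPoly2) : (dV0 i q).vars ⊆ q.vars := by
  intro x hx
  rw [mem_vars] at hx ⊢
  obtain ⟨m, hm, hxm⟩ := hx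
  refine ⟨m, ?_, hxm⟩
  rw [MvPolynomial.mem_support_iff] at hm ⊢
  intro h
  rw [coeff_dV0, h, mvDeriv_zero] at hm
  exact hm rfl

lemma pderiv_ne_zero_of_mem_vars {v : Fin 2 × ℕ} {q : DiffPoly2} (h : v ∈ q.vars) :
    pderiv v q ≠ 0 := by
  rw [mem_vars] at h
  obtain ⟨m, hm, hvm⟩ := h
  rw [MvPolynomial.mem_support_iff] at hm
  rw [Finsupp.mem_support_iff] at hvm
  intro h0
  have key := coeff_pderiv' v q (m - Finsupp.single v 1)
  rw [h0] at key
  have hadd : m - Finsupp.single v 1 + Finsupp.single v 1 = m :=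
    tsub_add_cancel_of_le (Finsupp.single_le_iff.2 (by omega))
  rw [hadd] at key
  have hne : ((m - Finsupp.single v 1 : (Fin 2 × ℕ) →₀ ℕ) v + 1) ≠ 0 := by omega
  have := (smul_eq_zero.1 ((Nat.cast_smul_eq_nsmul ℂ _ _).trans key.symm)).resolve_left
    (by exact_mod_cast hne)
  exact hm this

/-- Power series with no dependence on `u₀` above order 0. -/
def Tset (f : MvPowerSeries (Fin 2) ℂ) : Prop :=
  ∀ e : Fin 2 →₀ ℕ, e 0 ≠ 0 → MvPowerSeries.coeff e f = 0

/-- "w-only" differential polynomials. -/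
def SW (q : DiffPoly2) : Prop :=
  (∀ v ∈ q.vars, v.1 = (1 : Fin 2)) ∧ ∀ m, Tset (coeff m q)

lemma Tset_zero : Tset 0 := fun e _ => by simp

lemma Tset_mul {f g : MvPowerSeries (Fin 2) ℂ} (hf : Tset f) (hg : Tset g) : Tset (f * g) := by
  classical
  intro e he
  rw [MvPowerSeries.coeff_mul]
  refine Finset.sum_eq_zero fun p hp => ?_
  rw [Finset.HasAntidiagonal.mem_antidiagonal] at hp
  have : p.1 0 + p.2 0 = e 0 := by rw [← hp]; simp
  rcases Nat.eq_zero_or_pos (p.1 0) with h1 | h1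
  · rw [hg p.2 (by omega), mul_zero]
  · rw [hf p.1 (by omega), zero_mul]

lemma Tset_Xw : Tset (MvPowerSeries.X 1) := by
  classical
  intro e he
  rw [MvPowerSeries.coeff_X, if_neg]
  intro h
  rw [h] at he
  simp at he

lemma Tset_one : Tset 1 := by
  classical
  intro e he
  rw [MvPowerSeries.coeff_one, if_neg]
  intro h; rw [h] at he; simp at he

lemma Tset_smul {f : MvPowerSeries (Fin 2) ℂ} (n : ℕ) (hf : Tset f) : Tset (n • f) := by
  intro e he
  rw [map_nsmul, hf e he, smul_zero]

lemma Tset_mvDeriv {f : MvPowerSeries (Fin 2) ℂ} (hf : Tset f) : Tset (mvDeriv 1 f) := by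
  intro e he
  have : MvPowerSeries.coeff e (mvDeriv 1 f) =
      (e 1 + 1) • MvPowerSeries.coeff (e + Finsupp.single 1 1) f := rfl
  rw [this, hf _ (by simpa using he), smul_zero]

lemma mvDeriv_zero_of_Tset {f : MvPowerSeries (Fin 2) ℂ} (hf : Tset f) : mvDeriv 0 f = 0 := by
  funext e
  show (e 0 + 1) • MvPowerSeries.coeff (e + Finsupp.single 0 1) f = 0
  rw [hf _ (by simp), smul_zero]

lemma SW_zero : SW 0 := ⟨by simp, fun m => by simpa using Tset_zero⟩

lemma SW_add {q q' : DiffPoly2} (h : SW q) (h' : SW q') : SW (q + q') := by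
  classical
  constructor
  · intro v hv
    rcases Finset.mem_union.1 (vars_add_subset q q' hv) with hv | hv
    · exact h.1 v hv
    · exact h'.1 v hv
  · intro m e he
    rw [MvPolynomial.coeff_add, map_add, h.2 m e he, h'.2 m e he, add_zero]

lemma SW_sum {α : Type*} (s : Finset α) (f : α → DiffPoly2) (h : ∀ a ∈ s, SW (f a)) :
    SW (∑ a ∈ s, f a) := by
  classical
  induction s using Finset.cons_induction with
  | empty => simpa using SW_zero
  | cons a s ha ih =>
    rw [Finset.sum_cons]
    exact SW_add (h a (Finset.mem_cons_self a s)) (ih fun b hb => h b (Finset.mem_cons.2 (Or.inr hb)))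

lemma SW_mul {q q' : DiffPoly2} (h : SW q) (h' : SW q') : SW (q * q') := by
  classical
  constructor
  · intro v hv
    rcases Finset.mem_union.1 (vars_mul q q' hv) with hv | hv
    · exact h.1 v hv
    · exact h'.1 v hv
  · intro m e he
    rw [MvPolynomial.coeff_mul, map_sum]
    refine Finset.sum_eq_zero fun p _ => ?_
    exact Tset_mul (h.2 p.1) (h'.2 p.2) e he

lemma SW_monomial (m : (Fin 2 × ℕ) →₀ ℕ) (a : MvPowerSeries (Fin 2) ℂ)
    (hm : ∀ v ∈ m.support, v.1 = (1 : Fin 2)) (ha : Tset a) : SW (monomial m a) := by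
  constructor
  · intro v hv
    by_cases h0 : a = 0
    · simp [h0] at hv
    · rw [vars_monomial h0] at hv
      exact hm v hv
  · intro m' e he
    rw [MvPolynomial.coeff_monomial]
    split_ifs with h
    · exact ha e he
    · simp

lemma SW_X (n : ℕ) : SW (X ((1 : Fin 2), n)) := by
  rw [MvPolynomial.X]
  refine SW_monomial _ _ (fun v hv => ?_) Tset_one
  rw [Finsupp.support_single_ne_zero _ (by norm_num)] at hv
  simp at hv
  rw [hv]

lemma SW_ww : SW ww := by
  rw [ww, ← MvPolynomial.monomial_zero']
  exact SW_monomial _ _ (by simp) Tset_Xw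

lemma SW_pderiv {q : DiffPoly2} (v : Fin 2 × ℕ) (h : SW q) : SW (pderiv v q) := by
  refine ⟨fun x hx => h.1 x (vars_pderiv_subset v q hx), fun m => ?_⟩
  rw [coeff_pderiv']
  exact Tset_smul _ (h.2 _)

lemma SW_dV0 {q : DiffPoly2} (h : SW q) : SW (dV0 1 q) := by
  refine ⟨fun x hx => h.1 x (vars_dV0_subset 1 q hx), fun m => ?_⟩
  rw [coeff_dV0]
  exact Tset_mvDeriv (h.2 m)

lemma dV0_zero_of_SW {q : DiffPoly2} (h : SW q) : dV0 0 q = 0 := by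
  apply MvPolynomial.ext
  intro m
  rw [coeff_dV0, mvDeriv_zero_of_Tset (h.2 m)]
  simp

lemma SW_dX2 {q : DiffPoly2} (h : SW q) : SW (dX2 q) := by
  rw [dX2]
  refine SW_add (SW_sum _ _ fun i _ => ?_) (SW_sum _ _ fun v hv => ?_)
  · rcases (by decide : ∀ j : Fin 2, j = 0 ∨ j = 1) i with h0 | h0 <;> subst h0
    · rw [dV0_zero_of_SW h, mul_zero]; exact SW_zero
    · exact SW_mul (SW_X 0) (SW_dV0 h)
  · have hv1 : v.1 = (1 : Fin 2) := h.1 v hv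
    rw [hv1]
    exact SW_mul (SW_pderiv v h) (SW_X (v.2 + 1))

lemma SW_iter (k : ℕ) : SW (dX2^[k] (ww * X ((1 : Fin 2), 0))) := by
  induction k with
  | zero => exact SW_mul SW_ww (SW_X 0)
  | succ k ih => rw [Function.iterate_succ_apply']; exact SW_dX2 ih

lemma ww_ne_zero : ww ≠ 0 := by
  rw [ww]
  intro h
  have hX : (MvPowerSeries.X 1 : MvPowerSeries (Fin 2) ℂ) = 0 := by
    have := congrArg (coeff 0) h
    simpa using this
  have := congrArg (MvPowerSeries.coeff (Finsupp.single 1 1)) hX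
  classical
  rw [MvPowerSeries.coeff_X, if_pos rfl] at this
  simpa using this

lemma pderiv_ww (v : Fin 2 × ℕ) : pderiv v ww = 0 := pderiv_C

lemma pderiv_lin2_eq_zero {r : DiffPoly2} (v₀ : Fin 2 × ℕ) (hv₀ : v₀.1 = (0 : Fin 2))
    (hr : v₀ ∉ r.vars) : pderiv v₀ (lin2 1 r (ww * X ((1 : Fin 2), 0))) = 0 := by
  classical
  rw [lin2, map_add, map_sum]
  have h1 : pderiv v₀ (dV0 1 r * (ww * X ((1 : Fin 2), 0))) = 0 := by
    rw [pderiv_mul, pderiv_eq_zero_of_notMem_vars (fun h => hr (vars_dV0_subset 1 r h)),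
      zero_mul, zero_add, ww, pderiv_C_mul, pderiv_X_of_ne (by
        intro h; rw [← h] at hv₀; simp at hv₀), mul_zero, mul_zero]
  rw [h1, zero_add]
  refine Finset.sum_eq_zero fun v hv => ?_
  have hA : pderiv v₀ (pderiv v r) = 0 :=
    pderiv_eq_zero_of_notMem_vars (fun h => hr (vars_pderiv_subset v r h))
  have hB : pderiv v₀ (dX2^[v.2 + 1] (ww * X ((1 : Fin 2), 0))) = 0 := by
    refine pderiv_eq_zero_of_notMem_vars fun h => ?_
    have := (SW_iter (v.2 + 1)).1 v₀ h
    rw [hv₀] at this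
    simp at this
  rw [pderiv_mul, hA, hB, zero_mul, mul_zero, add_zero]

lemma pderiv_dX2_top {r : DiffPoly2} (N : ℕ)
    (hN : ((0 : Fin 2), N) ∈ r.vars) (hout : ((0 : Fin 2), N + 1) ∉ r.vars) :
    pderiv ((0 : Fin 2), N + 1) (dX2 r) = pderiv ((0 : Fin 2), N) r := by
  classical
  rw [dX2, map_add, map_sum, map_sum]
  have h1 : ∀ i : Fin 2, pderiv ((0 : Fin 2), N + 1) (X (i, 0) * dV0 i r) = 0 := by
    intro i
    rw [pderiv_mul, pderiv_X_of_ne (by simp), zero_mul, zero_add,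
      pderiv_eq_zero_of_notMem_vars (fun h => hout (vars_dV0_subset i r h)), mul_zero]
  rw [Finset.sum_eq_zero fun i _ => h1 i, zero_add]
  rw [Finset.sum_eq_single_of_mem ((0 : Fin 2), N) hN]
  · rw [pderiv_mul, pderiv_eq_zero_of_notMem_vars
      (fun h => hout (vars_pderiv_subset _ r h)), zero_mul, zero_add,
      pderiv_X_self, mul_one]
  · intro v hv hne
    rw [pderiv_mul, pderiv_eq_zero_of_notMem_vars
      (fun h => hout (vars_pderiv_subset _ r h)), zero_mul, zero_add,
      pderiv_X_of_ne, mul_zero]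
    intro h
    apply hne
    have h1 : v.1 = (0 : Fin 2) := congrArg Prod.fst h
    have h2 : v.2 = N := by have := congrArg Prod.snd h; simpa using this
    exact Prod.ext h1 h2

lemma pderiv_dX2_zero {r : DiffPoly2} (hvars : ∀ v ∈ r.vars, v.1 = (1 : Fin 2)) :
    pderiv ((0 : Fin 2), 0) (dX2 r) = dV0 0 r := by
  classical
  have hnot : ∀ q : DiffPoly2, q.vars ⊆ r.vars → pderiv ((0 : Fin 2), 0) q = 0 := by
    intro q hq
    refine pderiv_eq_zero_of_notMem_vars fun h => ?_
    have := hvars _ (hq h)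
    simp at this
  rw [dX2, map_add, map_sum, map_sum, Fin.sum_univ_two]
  rw [pderiv_mul, pderiv_X_self, one_mul, hnot _ (vars_dV0_subset 0 r), mul_zero, add_zero]
  rw [pderiv_mul, pderiv_X_of_ne (by simp), zero_mul, zero_add,
    hnot _ (vars_dV0_subset 1 r), mul_zero, add_zero]
  rw [Finset.sum_eq_zero, add_zero]
  intro v hv
  rw [pderiv_mul, hnot _ (vars_pderiv_subset v r), zero_mul, zero_add,
    pderiv_X_of_ne, mul_zero]
  intro h
  have h1 : v.1 = (1 : Fin 2) := hvars v hv
  have := congrArg Prod.fst h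
  rw [h1] at this
  simp at this

theorem diffpoly_uniqueness_two_var (p : ℕ) (r : DiffPoly2)
    (hhom : IsWeightedHomogeneous (fun v : Fin 2 × ℕ => v.2 + 1) r p)
    (hu : ∀ m ∈ r.support, ∀ e : Fin 2 →₀ ℕ,
      MvPowerSeries.coeff e (coeff m r) ≠ 0 →
      1 ≤ e 0 + ∑ v ∈ m.support.filter (fun v => v.1 = 0), m v)
    (heq : lin2 1 r (ww * X (1, 0)) - ww * dX2 r = 0) :
    r = 0 := by
  classical
  -- Step A: r has no polynomial u-variables
  have hvars : ∀ v ∈ r.vars, v.1 = (1 : Fin 2) := by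
    by_contra hc
    push_neg at hc
    obtain ⟨v, hv, hv1⟩ := hc
    have hv0 : v.1 = (0 : Fin 2) := by
      rcases (by decide : ∀ j : Fin 2, j = 0 ∨ j = 1) v.1 with h | h
      · exact h
      · exact absurd h hv1
    set s : Finset ℕ := (r.vars.filter fun v => v.1 = (0 : Fin 2)).image Prod.snd with hs
    have hne : s.Nonempty := ⟨v.2, Finset.mem_image.2 ⟨v, Finset.mem_filter.2 ⟨hv, hv0⟩, rfl⟩⟩
    set N := s.max' hne with hNdef
    have hNmem : ((0 : Fin 2), N) ∈ r.vars := by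
      obtain ⟨v', hv', hv'2⟩ := Finset.mem_image.1 (s.max'_mem hne)
      obtain ⟨hv'a, hv'b⟩ := Finset.mem_filter.1 hv'
      have hvv : v' = ((0 : Fin 2), N) := Prod.ext hv'b hv'2
      rwa [← hvv]
    have hout : ((0 : Fin 2), N + 1) ∉ r.vars := by
      intro h
      have hmem : N + 1 ∈ s :=
        Finset.mem_image.2 ⟨((0 : Fin 2), N + 1), Finset.mem_filter.2 ⟨h, rfl⟩, rfl⟩
      have := s.le_max' _ hmem
      omega
    have h2 := congrArg (pderiv ((0 : Fin 2), N + 1)) heq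
    rw [map_sub, map_zero, pderiv_lin2_eq_zero _ rfl hout, zero_sub, neg_eq_zero, ww,
      pderiv_C_mul, pderiv_dX2_top N hNmem hout, ← ww] at h2
    rcases mul_eq_zero.1 h2 with h | h
    · exact ww_ne_zero h
    · exact pderiv_ne_zero_of_mem_vars hNmem h
  -- Step B: the coefficients of r do not depend on u₀ either
  have hout0 : ((0 : Fin 2), 0) ∉ r.vars := by
    intro h
    have := hvars _ h
    simp at this
  have h2 := congrArg (pderiv ((0 : Fin 2), 0)) heq
  rw [map_sub, map_zero, pderiv_lin2_eq_zero _ rfl hout0, zero_sub, neg_eq_zero, ww,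
    pderiv_C_mul, pderiv_dX2_zero hvars, ← ww] at h2
  have hdv : dV0 0 r = 0 := by
    rcases mul_eq_zero.1 h2 with h | h
    · exact absurd h ww_ne_zero
    · exact h
  -- conclude r = 0
  by_contra hr0
  obtain ⟨m, hm⟩ := MvPolynomial.support_nonempty.2 hr0
  have hcm : coeff m r ≠ 0 := MvPolynomial.mem_support_iff.1 hm
  obtain ⟨e, he⟩ : ∃ e, MvPowerSeries.coeff e (coeff m r) ≠ 0 := by
    by_contra h
    push_neg at h
    exact hcm (MvPowerSeries.ext fun n => by rw [h n, map_zero])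
  have hfil : (m.support.filter fun v => v.1 = (0 : Fin 2)) = ∅ := by
    rw [Finset.filter_eq_empty_iff]
    intro v' hvm
    have hvv : v' ∈ r.vars := (mem_vars v').2 ⟨m, hm, hvm⟩
    have := hvars v' hvv
    simp [this]
  have hge := hu m hm e he
  rw [hfil] at hge
  simp only [Finset.sum_empty, add_zero] at hge
  have hmv : mvDeriv 0 (coeff m r) = 0 := by
    have h3 := congrArg (coeff m) hdv
    rw [coeff_dV0] at h3
    simpa using h3
  have he0 : e - Finsupp.single 0 1 + Finsupp.single 0 1 = e :=
    tsub_add_cancel_of_le (Finsupp.single_le_iff.2 (by omega))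
  have h5 : ((e - Finsupp.single 0 1 : Fin 2 →₀ ℕ) 0 + 1) •
      MvPowerSeries.coeff ((e - Finsupp.single 0 1) + Finsupp.single 0 1) (coeff m r) = 0 :=
    congrFun hmv (e - Finsupp.single 0 1)
  rw [he0] at h5
  rcases smul_eq_zero.1 h5 with h | h
  · omega
  · exact he h
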